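/- Let x, y ∈ ℝ^n with ⟨x, y⟩ ≥ 0. Then ‖x + y‖ + (√2 − 1)·‖x − y‖ ≥ ‖x‖ + ‖y‖. -/

import Mathlib

theorem stmt_7 (n : ℕ) (x y : EuclideanSpace ℝ (Fin n))
    (hxy : (0:ℝ) ≤ ∑ i, x i * y i) :
    ‖x + y‖ + (Real.sqrt 2 - 1) * ‖x - y‖ ≥ ‖x‖ + ‖y‖ := by
  have hinner : (0:ℝ) ≤ inner ℝ x y := by
    rw [PiLp.inner_apply]
    simpa [RCLike.inner_apply, mul_comm] using hxy
  have ha : (0:ℝ) ≤ ‖x + y‖ := norm_nonneg _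
  have hb : (0:ℝ) ≤ ‖x - y‖ := norm_nonneg _
  have h1 : ‖x + y‖ ^ 2 = ‖x‖ ^ 2 + 2 * inner ℝ x y + ‖y‖ ^ 2 := by
    have := @norm_add_sq_real (EuclideanSpace ℝ (Fin n)) _ _ x y
    nlinarith [this]
  have h2 : ‖x - y‖ ^ 2 = ‖x‖ ^ 2 - 2 * inner ℝ x y + ‖y‖ ^ 2 := by
    have := @norm_sub_sq_real (EuclideanSpace ℝ (Fin n)) _ _ x y
    nlinarith [this]
  have hba : ‖x - y‖ ≤ ‖x + y‖ := by nlinarith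
  have hs : Real.sqrt 2 ^ 2 = 2 := Real.sq_sqrt (by norm_num)
  have hs1 : (1:ℝ) ≤ Real.sqrt 2 := by
    nlinarith [Real.sqrt_nonneg 2]
  have hxn : (0:ℝ) ≤ ‖x‖ := norm_nonneg _
  have hyn : (0:ℝ) ≤ ‖y‖ := norm_nonneg _
  have key : (‖x‖ + ‖y‖) ^ 2 ≤ (‖x + y‖ + (Real.sqrt 2 - 1) * ‖x - y‖) ^ 2 := by
    nlinarith [sq_nonneg (‖x‖ - ‖y‖), mul_le_mul_of_nonneg_left hba hb,
      sq_nonneg (‖x + y‖ - ‖x - y‖)]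
  have hrhs : (0:ℝ) ≤ ‖x + y‖ + (Real.sqrt 2 - 1) * ‖x - y‖ := by nlinarith
  nlinarith [key]
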